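/- Fix an integer n ≥ 1. Let 𝒫 be the collection of subsets of {1,…,n}, for integers i,j,t let M_{i,j}^t be the real 𝒫×𝒫 matrix with (X,Y) entry 1 if |X| = i, |Y| = j, |X∩Y| = t and 0 otherwise, and for 0 ≤ k ≤ ⌊n/2⌋ let L_k := {b ∈ ℝ^{𝒫} : M_{k−1,k}^{k−1}·b = 0 and b_X = 0 whenever |X| ≠ k}. Then for all i, j, k, l ∈ {0,…,n} with k, l ≤ ⌊n/2⌋ and all c ∈ L_l, b ∈ L_k: cᵀ·M_{l,i}^l·M_{j,k}^k·b = C(n−2k, i−k)·(cᵀb) if l = k and i = j, and cᵀ·M_{l,i}^l·M_{j,k}^k·b = 0 otherwise. -/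

import Mathlib

open Matrix

/-- Real-valued binomial coefficient `C(a,b)` of integers, equal to `0` whenever `b < 0` or
`b > a`. -/
noncomputable def zchoose (a b : ℤ) : ℝ :=
  if 0 ≤ b ∧ b ≤ a then ((a.toNat).choose b.toNat : ℝ) else 0

/-- The matrix `M_{i,j}^t`, indexed by the subsets of `{1,…,n}`, with `(X,Y)` entry `1` iff
`|X| = i`, `|Y| = j` and `|X ∩ Y| = t`. (Integer parameters, so that degenerate values such
as `i = −1` give the zero matrix.) -/
def Mmat (n : ℕ) (i j t : ℤ) : Matrix (Finset (Fin n)) (Finset (Fin n)) ℝ :=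
  Matrix.of fun X Y =>
    if (X.card : ℤ) = i ∧ (Y.card : ℤ) = j ∧ ((X ∩ Y).card : ℤ) = t then 1 else 0

/-- The set `L_k = {b ∈ ℝ^𝒫 : M_{k−1,k}^{k−1}·b = 0, b_X = 0 whenever |X| ≠ k}`. -/
def Lset (n k : ℕ) : Set (Finset (Fin n) → ℝ) :=
  {b | Mmat n ((k : ℤ) - 1) (k : ℤ) ((k : ℤ) - 1) *ᵥ b = 0 ∧
       ∀ X : Finset (Fin n), X.card ≠ k → b X = 0}

lemma zchoose_neg {a b : ℤ} (h : b < 0) : zchoose a b = 0 := if_neg (by omega)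
lemma zchoose_gt {a b : ℤ} (h : a < b) : zchoose a b = 0 := if_neg (by omega)
lemma zchoose_natCast (a b : ℕ) : zchoose (a : ℤ) (b : ℤ) = (a.choose b : ℝ) := by
  unfold zchoose
  by_cases h : (b : ℤ) ≤ (a : ℤ)
  · rw [if_pos ⟨Int.natCast_nonneg b, h⟩, Int.toNat_natCast, Int.toNat_natCast]
  · rw [if_neg (fun hc => h hc.2), Nat.choose_eq_zero_of_lt (by exact_mod_cast not_le.mp h),
      Nat.cast_zero]

lemma zchoose_vandermonde (a m : ℕ) (ρ : ℤ) :
    zchoose ((a : ℤ) + m) (ρ + m) =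
      ∑ s ∈ Finset.range (m + 1), (m.choose s : ℝ) * zchoose (a : ℤ) (ρ + s) := by
  by_cases hneg : ρ + m < 0
  · rw [zchoose_neg hneg]
    refine (Finset.sum_eq_zero fun s hs => ?_).symm
    rw [zchoose_neg (by rw [Finset.mem_range] at hs; omega), mul_zero]
  · push_neg at hneg
    set R : ℕ := (ρ + m).toNat with hR
    have hRe : (R : ℤ) = ρ + m := Int.toNat_of_nonneg hneg
    -- RHS reflected
    have hrefl : ∑ s ∈ Finset.range (m + 1), (m.choose s : ℝ) * zchoose (a : ℤ) (ρ + s)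
        = ∑ p ∈ Finset.range (m + 1), (m.choose p : ℝ) * zchoose (a : ℤ) ((R : ℤ) - p) := by
      rw [← Finset.sum_range_reflect]
      refine Finset.sum_congr rfl fun p hp => ?_
      rw [Finset.mem_range] at hp
      have h1 : m + 1 - 1 - p = m - p := by omega
      rw [h1, Nat.choose_symm (by omega)]
      congr 2
      push_cast [Nat.cast_sub (by omega : p ≤ m)]
      omega
    rw [hrefl]
    -- both sides equal sum over range (m + R + 1)
    have hext : ∑ p ∈ Finset.range (m + 1), (m.choose p : ℝ) * zchoose (a : ℤ) ((R : ℤ) - p)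
        = ∑ p ∈ Finset.range (m + R + 1), (m.choose p : ℝ) * zchoose (a : ℤ) ((R : ℤ) - p) := by
      refine Finset.sum_subset (Finset.range_subset_range.mpr (by omega)) fun p _ hp => ?_
      rw [Finset.mem_range] at hp
      push_neg at hp
      rw [Nat.choose_eq_zero_of_lt (by omega), Nat.cast_zero, zero_mul]
    rw [hext]
    have hZ : zchoose ((a : ℤ) + m) (ρ + m) = (((a + m).choose R : ℕ) : ℝ) := by
      rw [← hRe]
      exact_mod_cast zchoose_natCast (a + m) R
    rw [hZ]
    have hvdm : (a + m).choose R = ∑ p ∈ Finset.range (R + 1), m.choose p * a.choose (R - p) := by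
      rw [Nat.add_comm a m, Nat.add_choose_eq]
      rw [Finset.Nat.sum_antidiagonal_eq_sum_range_succ (fun p q => m.choose p * a.choose q)]
    rw [hvdm]
    push_cast
    rw [← Finset.sum_subset (Finset.range_subset_range.mpr (by omega : R + 1 ≤ m + R + 1))
      (fun p _ hp => by
        rw [Finset.mem_range, not_lt] at hp
        rw [zchoose_neg (by omega : (R : ℤ) - p < 0), mul_zero])]
    refine Finset.sum_congr rfl fun p hp => ?_
    rw [Finset.mem_range] at hp
    congr 1
    rw [show (R : ℤ) - p = ((R - p : ℕ) : ℤ) by omega, zchoose_natCast]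

lemma card_supersets (n : ℕ) (W : Finset (Fin n)) (i : ℕ) :
    (((Finset.univ.filter fun Y : Finset (Fin n) => W ⊆ Y ∧ Y.card = i)).card : ℝ)
      = zchoose ((n : ℤ) - W.card) ((i : ℤ) - W.card) := by
  have hWn : W.card ≤ n := by simpa using Finset.card_le_univ W
  by_cases h1 : i < W.card
  · rw [Finset.filter_false_of_mem, Finset.card_empty, Nat.cast_zero,
      zchoose_neg (by omega)]
    intro Y _ hY
    have := Finset.card_le_card hY.1
    omega
  push_neg at h1
  by_cases h2 : n < i
  · rw [Finset.filter_false_of_mem, Finset.card_empty, Nat.cast_zero,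
      zchoose_gt (by omega)]
    intro Y _ hY
    have : Y.card ≤ n := by simpa using Finset.card_le_univ Y
    omega
  push_neg at h2
  have hcard : (Finset.univ.filter fun Y : Finset (Fin n) => W ⊆ Y ∧ Y.card = i).card
      = (Finset.powersetCard (i - W.card) Wᶜ).card := by
    refine Finset.card_bij' (fun Y _ => Y \ W) (fun S _ => S ∪ W) ?_ ?_ ?_ ?_
    · intro Y hY
      rw [Finset.mem_filter] at hY
      rw [Finset.mem_powersetCard]
      refine ⟨fun x hx => ?_, ?_⟩
      · rw [Finset.mem_sdiff] at hx
        simpa using hx.2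
      · rw [Finset.card_sdiff_of_subset hY.2.1, hY.2.2]
    · intro S hS
      rw [Finset.mem_powersetCard] at hS
      rw [Finset.mem_filter]
      have hdisj : Disjoint S W := by
        rw [Finset.disjoint_right]
        intro x hxW hxS
        have := hS.1 hxS
        simp at this
        exact this hxW
      refine ⟨Finset.mem_univ _, Finset.subset_union_right, ?_⟩
      rw [Finset.card_union_of_disjoint hdisj, hS.2]
      omega
    · intro Y hY
      rw [Finset.mem_filter] at hY
      exact Finset.sdiff_union_of_subset hY.2.1
    · intro S hS
      rw [Finset.mem_powersetCard] at hS
      refine Finset.union_sdiff_cancel_right ?_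
      rw [Finset.disjoint_left]
      intro x hxS hxW
      have := hS.1 hxS
      simp at this
      exact this hxW
  rw [hcard, Finset.card_powersetCard, Finset.card_compl, Fintype.card_fin]
  rw [show (n : ℤ) - W.card = ((n - W.card : ℕ) : ℤ) by omega,
    show (i : ℤ) - W.card = ((i - W.card : ℕ) : ℤ) by omega, zchoose_natCast]

lemma card_subsets {n : ℕ} (A : Finset (Fin n)) (s : ℕ) :
    (Finset.univ.filter fun S : Finset (Fin n) => S ⊆ A ∧ S.card = s).card
      = A.card.choose s := by
  rw [← Finset.card_powersetCard]
  congr 1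
  ext S
  simp [Finset.mem_powersetCard]

lemma inter_card_subset {α : Type*} [DecidableEq α] {S Z : Finset α} {r : ℕ}
    (hS : S.card = r) : ((S ∩ Z).card = r ↔ S ⊆ Z) := by
  constructor
  · intro h
    have h2 : S ∩ Z = S :=
      Finset.eq_of_subset_of_card_le Finset.inter_subset_left (by omega)
    rw [← h2]
    exact Finset.inter_subset_right
  · intro h
    rw [Finset.inter_eq_left.mpr h, hS]

lemma shadow_zero {n k : ℕ} {b : Finset (Fin n) → ℝ}
    (hb1 : Mmat n ((k : ℤ) - 1) (k : ℤ) ((k : ℤ) - 1) *ᵥ b = 0) :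
    ∀ S : Finset (Fin n), S.card < k →
      ∑ Z : Finset (Fin n), (if S ⊆ Z ∧ Z.card = k then b Z else 0) = 0 := by
  suffices h : ∀ d : ℕ, ∀ S : Finset (Fin n), S.card + d + 1 = k →
      ∑ Z : Finset (Fin n), (if S ⊆ Z ∧ Z.card = k then b Z else 0) = 0 by
    intro S hS
    exact h (k - 1 - S.card) S (by omega)
  intro d
  induction d with
  | zero =>
    intro S hS
    have h0 := congrFun hb1 S
    simp only [Matrix.mulVec, dotProduct, Pi.zero_apply, Mmat, Matrix.of_apply] at h0
    refine Eq.trans (Finset.sum_congr rfl fun Z _ => ?_) h0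
    rw [ite_mul, one_mul, zero_mul]
    refine if_congr ?_ rfl rfl
    constructor
    · rintro ⟨h1, h2⟩
      refine ⟨by omega, by omega, ?_⟩
      rw [(inter_card_subset (by omega : S.card = k - 1)).mpr h1]
      omega
    · rintro ⟨h1, h2, h3⟩
      refine ⟨(inter_card_subset (by omega : S.card = k - 1)).mp (by omega), by omega⟩
  | succ d ih =>
    intro S hS
    have h1 : ∑ x ∈ Sᶜ, ∑ Z : Finset (Fin n),
        (if insert x S ⊆ Z ∧ Z.card = k then b Z else 0) = 0 := by
      refine Finset.sum_eq_zero fun x hx => ?_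
      refine ih (insert x S) ?_
      rw [Finset.card_insert_of_notMem (by simpa using hx)]
      omega
    rw [Finset.sum_comm] at h1
    have h2 : ∀ Z : Finset (Fin n),
        ∑ x ∈ Sᶜ, (if insert x S ⊆ Z ∧ Z.card = k then b Z else 0)
          = ((d : ℝ) + 2) * (if S ⊆ Z ∧ Z.card = k then b Z else 0) := by
      intro Z
      by_cases hZ : S ⊆ Z ∧ Z.card = k
      · have hcond : ∀ x : Fin n, (insert x S ⊆ Z ∧ Z.card = k) ↔ x ∈ Z := by
          intro x
          rw [Finset.insert_subset_iff]
          tauto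
        calc ∑ x ∈ Sᶜ, (if insert x S ⊆ Z ∧ Z.card = k then b Z else 0)
            = ∑ x ∈ Sᶜ, (if x ∈ Z then b Z else 0) := by
              exact Finset.sum_congr rfl fun x _ => if_congr (hcond x) rfl rfl
          _ = ∑ x ∈ Sᶜ ∩ Z, b Z := by rw [Finset.sum_ite_mem]
          _ = ((Sᶜ ∩ Z).card : ℝ) * b Z := by
              rw [Finset.sum_const, nsmul_eq_mul]
          _ = ((d : ℝ) + 2) * b Z := by
              congr 1
              have : Sᶜ ∩ Z = Z \ S := by
                ext x
                simp only [Finset.mem_inter, Finset.mem_compl, Finset.mem_sdiff]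
                tauto
              rw [this, Finset.card_sdiff_of_subset hZ.1, hZ.2]
              push_cast
              have : S.card + (d + 1) + 1 = k := hS
              have hkS : k - S.card = d + 2 := by omega
              rw [hkS]
              push_cast
              ring
          _ = ((d : ℝ) + 2) * (if S ⊆ Z ∧ Z.card = k then b Z else 0) := by
              rw [if_pos hZ]
      · rw [if_neg hZ, mul_zero]
        refine Finset.sum_eq_zero fun x _ => ?_
        rw [if_neg]
        rintro ⟨hins, hcard⟩
        exact hZ ⟨(Finset.subset_insert x S).trans hins, hcard⟩
    rw [Finset.sum_congr rfl fun Z _ => h2 Z, ← Finset.mul_sum] at h1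
    have : ((d : ℝ) + 2) ≠ 0 := by positivity
    exact (mul_eq_zero.mp h1).resolve_left this

lemma sigma_eval {n k : ℕ} {b : Finset (Fin n) → ℝ} (hb : b ∈ Lset n k)
    (S : Finset (Fin n)) :
    ∑ Z : Finset (Fin n), (if S ⊆ Z then b Z else 0)
      = if S.card = k then b S else 0 := by
  obtain ⟨hb1, hb2⟩ := hb
  rcases lt_trichotomy S.card k with h | h | h
  · rw [if_neg (by omega)]
    have step : ∀ Z : Finset (Fin n),
        (if S ⊆ Z then b Z else 0) = (if S ⊆ Z ∧ Z.card = k then b Z else 0) := by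
      intro Z
      by_cases h1 : S ⊆ Z
      · by_cases h2 : Z.card = k
        · rw [if_pos h1, if_pos ⟨h1, h2⟩]
        · rw [if_pos h1, if_neg (by tauto), hb2 Z h2]
      · rw [if_neg h1, if_neg (by tauto)]
    rw [Finset.sum_congr rfl fun Z _ => step Z]
    exact shadow_zero hb1 S h
  · rw [if_pos h]
    have step : ∀ Z : Finset (Fin n),
        (if S ⊆ Z then b Z else 0) = (if Z = S then b Z else 0) := by
      intro Z
      by_cases hZS : Z = S
      · subst hZS
        simp
      · rw [if_neg hZS]
        by_cases h1 : S ⊆ Z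
        · rw [if_pos h1]
          refine hb2 Z ?_
          have : S ⊂ Z := Finset.ssubset_iff_subset_ne.mpr ⟨h1, fun he => hZS he.symm⟩
          have := Finset.card_lt_card this
          omega
        · rw [if_neg h1]
    rw [Finset.sum_congr rfl fun Z _ => step Z, Finset.sum_ite_eq' Finset.univ S b,
      if_pos (Finset.mem_univ S)]
  · rw [if_neg (by omega)]
    refine Finset.sum_eq_zero fun Z _ => ?_
    by_cases h1 : S ⊆ Z
    · rw [if_pos h1]
      refine hb2 Z ?_
      have := Finset.card_le_card h1
      omega
    · rw [if_neg h1]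

lemma N_eval {n k l : ℕ} {c b : Finset (Fin n) → ℝ} (hc : c ∈ Lset n l) (hb : b ∈ Lset n k)
    (s : ℕ) :
    ∑ X : Finset (Fin n), ∑ Z : Finset (Fin n),
        c X * b Z * (((X ∩ Z).card.choose s : ℕ) : ℝ)
      = if s = l ∧ s = k then c ⬝ᵥ b else 0 := by
  have step1 : ∀ X Z : Finset (Fin n),
      c X * b Z * (((X ∩ Z).card.choose s : ℕ) : ℝ)
        = ∑ S : Finset (Fin n), (if S.card = s then (1:ℝ) else 0)
            * (if S ⊆ X then c X else 0) * (if S ⊆ Z then b Z else 0) := by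
    intro X Z
    have hcount : (((X ∩ Z).card.choose s : ℕ) : ℝ)
        = ∑ S : Finset (Fin n), (if S ⊆ X ∩ Z ∧ S.card = s then (1:ℝ) else 0) := by
      rw [← card_subsets (X ∩ Z) s]
      rw [Finset.card_filter]
      push_cast
      rfl
    rw [hcount, Finset.mul_sum]
    refine Finset.sum_congr rfl fun S _ => ?_
    by_cases h1 : S.card = s <;> by_cases h2 : S ⊆ X <;> by_cases h3 : S ⊆ Z <;>
      simp [h1, h2, h3, Finset.subset_inter_iff] <;> ring
  rw [Finset.sum_congr rfl fun X _ => Finset.sum_congr rfl fun Z _ => step1 X Z]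
  rw [Finset.sum_congr rfl fun X _ => Finset.sum_comm, Finset.sum_comm]
  have step2 : ∀ S : Finset (Fin n),
      ∑ X : Finset (Fin n), ∑ Z : Finset (Fin n),
        (if S.card = s then (1:ℝ) else 0) * (if S ⊆ X then c X else 0)
          * (if S ⊆ Z then b Z else 0)
      = (if S.card = s then (1:ℝ) else 0) * (if S.card = l then c S else 0)
          * (if S.card = k then b S else 0) := by
    intro S
    simp only [← Finset.mul_sum, ← Finset.sum_mul]
    rw [sigma_eval hc S, sigma_eval hb S]
  rw [Finset.sum_congr rfl fun S _ => step2 S]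
  by_cases hlk : s = l ∧ s = k
  · obtain ⟨hl, hk⟩ := hlk
    subst hl hk
    rw [if_pos ⟨rfl, rfl⟩]
    rw [dotProduct]
    refine Finset.sum_congr rfl fun S _ => ?_
    by_cases h : S.card = s
    · simp [h]
    · obtain ⟨_, hc2⟩ := hc
      simp [h, hc2 S h]
  · rw [if_neg hlk]
    refine Finset.sum_eq_zero fun S _ => ?_
    by_cases h1 : S.card = s
    · by_cases h2 : S.card = l
      · have hk : S.card ≠ k := fun h => hlk ⟨by omega, by omega⟩
        rw [if_neg hk, mul_zero]
      · rw [if_neg h2, mul_zero, zero_mul]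
    · rw [if_neg h1, zero_mul, zero_mul]


set_option maxHeartbeats 1000000 in
/-- for `i, j, k, l ∈ {0,…,n}` with `k, l ≤ ⌊n/2⌋`, `c ∈ L_l` and `b ∈ L_k`,
`cᵀ·M_{l,i}^l·M_{j,k}^k·b = C(n−2k, i−k)·(cᵀb)` if `l = k` and `i = j`, and `= 0`
otherwise. -/
theorem statement13 (n : ℕ) (hn : 1 ≤ n) (i j k l : ℕ)
    (hi : i ≤ n) (hj : j ≤ n) (hk : k ≤ n / 2) (hl : l ≤ n / 2)
    (c b : Finset (Fin n) → ℝ) (hc : c ∈ Lset n l) (hb : b ∈ Lset n k) :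
    c ⬝ᵥ ((Mmat n (l : ℤ) (i : ℤ) (l : ℤ) * Mmat n (j : ℤ) (k : ℤ) (k : ℤ)) *ᵥ b)
      = if l = k ∧ i = j then zchoose ((n : ℤ) - 2 * k) ((i : ℤ) - k) * (c ⬝ᵥ b)
        else 0 := by
  by_cases hij : i = j
  case neg =>
    rw [if_neg (fun h => hij h.2)]
    have hAB : Mmat n (l : ℤ) (i : ℤ) (l : ℤ) * Mmat n (j : ℤ) (k : ℤ) (k : ℤ) = 0 := by
      ext X Z
      rw [Matrix.mul_apply, Matrix.zero_apply]
      refine Finset.sum_eq_zero fun Y _ => ?_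
      unfold Mmat
      rw [Matrix.of_apply, Matrix.of_apply]
      by_cases h1 : ((X.card : ℤ) = (l : ℤ) ∧ (Y.card : ℤ) = (i : ℤ)
          ∧ (((X ∩ Y).card : ℤ) = (l : ℤ)))
      · rw [if_pos h1, one_mul, if_neg]
        rintro ⟨hYj, -, -⟩
        have := h1.2.1
        exact hij (by omega)
      · rw [if_neg h1, zero_mul]
    rw [hAB, Matrix.zero_mulVec, dotProduct_zero]
  case pos =>
    subst hij
    have hlkn : l + k ≤ n := by omega
    have hkn : k ≤ n := by omega
    have expand : c ⬝ᵥ ((Mmat n (l : ℤ) (i : ℤ) (l : ℤ) * Mmat n (i : ℤ) (k : ℤ) (k : ℤ)) *ᵥ b)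
        = ∑ X : Finset (Fin n), ∑ Z : Finset (Fin n), c X * b Z
            * ∑ Y : Finset (Fin n),
                Mmat n (l : ℤ) (i : ℤ) (l : ℤ) X Y * Mmat n (i : ℤ) (k : ℤ) (k : ℤ) Y Z := by
      rw [dotProduct]
      refine Finset.sum_congr rfl fun X _ => ?_
      have h1 : ((Mmat n (l : ℤ) (i : ℤ) (l : ℤ) * Mmat n (i : ℤ) (k : ℤ) (k : ℤ)) *ᵥ b) X
          = ∑ Z : Finset (Fin n), (∑ Y : Finset (Fin n),
              Mmat n (l : ℤ) (i : ℤ) (l : ℤ) X Y * Mmat n (i : ℤ) (k : ℤ) (k : ℤ) Y Z) * b Z := by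
        simp [Matrix.mulVec, dotProduct, Matrix.mul_apply]
      rw [h1, Finset.mul_sum]
      exact Finset.sum_congr rfl fun Z _ => by ring
    have key : ∀ X Z : Finset (Fin n),
        c X * b Z * (∑ Y : Finset (Fin n),
            Mmat n (l : ℤ) (i : ℤ) (l : ℤ) X Y * Mmat n (i : ℤ) (k : ℤ) (k : ℤ) Y Z)
        = ∑ s ∈ Finset.range (n + 1), (c X * b Z * (((X ∩ Z).card.choose s : ℕ) : ℝ))
            * zchoose ((n : ℤ) - l - k) ((i : ℤ) - l - k + s) := by
      intro X Z
      by_cases hcX : c X = 0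
      · simp [hcX]
      by_cases hbZ : b Z = 0
      · simp [hbZ]
      have hX : X.card = l := by by_contra h; exact hcX (hc.2 X h)
      have hZ : Z.card = k := by by_contra h; exact hbZ (hb.2 Z h)
      have hsum : (∑ Y : Finset (Fin n),
            Mmat n (l : ℤ) (i : ℤ) (l : ℤ) X Y * Mmat n (i : ℤ) (k : ℤ) (k : ℤ) Y Z)
          = ∑ Y : Finset (Fin n), (if X ∪ Z ⊆ Y ∧ Y.card = i then (1 : ℝ) else 0) := by
        refine Finset.sum_congr rfl fun Y _ => ?_
        unfold Mmat
        rw [Matrix.of_apply, Matrix.of_apply]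
        have e1 : ((X.card : ℤ) = (l : ℤ) ∧ (Y.card : ℤ) = (i : ℤ)
              ∧ ((X ∩ Y).card : ℤ) = (l : ℤ)) ↔ (Y.card = i ∧ X ⊆ Y) := by
          rw [← inter_card_subset hX]
          constructor
          · rintro ⟨-, h2, h3⟩; exact ⟨by omega, by omega⟩
          · rintro ⟨h2, h3⟩; exact ⟨by omega, by omega, by omega⟩
        have e2 : ((Y.card : ℤ) = (i : ℤ) ∧ (Z.card : ℤ) = (k : ℤ)
              ∧ ((Y ∩ Z).card : ℤ) = (k : ℤ)) ↔ (Y.card = i ∧ Z ⊆ Y) := by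
          rw [Finset.inter_comm Y Z, ← inter_card_subset hZ]
          constructor
          · rintro ⟨h2, -, h3⟩; exact ⟨by omega, by omega⟩
          · rintro ⟨h2, h3⟩; exact ⟨by omega, by omega, by omega⟩
        by_cases hA : Y.card = i ∧ X ⊆ Y
        · rw [if_pos (e1.mpr hA)]
          by_cases hB : Y.card = i ∧ Z ⊆ Y
          · rw [if_pos (e2.mpr hB), if_pos ⟨Finset.union_subset hA.2 hB.2, hA.1⟩, one_mul]
          · rw [if_neg (fun h => hB (e2.mp h)), mul_zero, if_neg]
            rintro ⟨hu, hci⟩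
            exact hB ⟨hci, (Finset.union_subset_iff.mp hu).2⟩
        · rw [if_neg (fun h => hA (e1.mp h)), zero_mul, if_neg]
          rintro ⟨hu, hci⟩
          exact hA ⟨hci, (Finset.union_subset_iff.mp hu).1⟩
      rw [hsum]
      have hcard : (∑ Y : Finset (Fin n), if X ∪ Z ⊆ Y ∧ Y.card = i then (1 : ℝ) else 0)
          = zchoose ((n : ℤ) - (X ∪ Z).card) ((i : ℤ) - (X ∪ Z).card) := by
        rw [← card_supersets n (X ∪ Z) i, Finset.card_filter]
        push_cast
        rfl
      have hm : (X ∩ Z).card + (X ∪ Z).card = l + k := by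
        rw [Finset.card_inter_add_card_union, hX, hZ]
      have hmk : (X ∩ Z).card ≤ k := by
        have := Finset.card_le_card (Finset.inter_subset_right : X ∩ Z ⊆ Z)
        omega
      have h1 : (n : ℤ) - (X ∪ Z).card = ((n - l - k : ℕ) : ℤ) + ((X ∩ Z).card : ℕ) := by
        omega
      have h2 : (i : ℤ) - (X ∪ Z).card = ((i : ℤ) - l - k) + ((X ∩ Z).card : ℕ) := by
        omega
      rw [hcard, h1, h2, zchoose_vandermonde (n - l - k) (X ∩ Z).card ((i : ℤ) - l - k),
        Finset.sum_subset (Finset.range_subset_range.mpr (by omega : (X ∩ Z).card + 1 ≤ n + 1))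
          (fun s _ hs => by
            rw [Finset.mem_range, not_lt] at hs
            rw [Nat.choose_eq_zero_of_lt (by omega), Nat.cast_zero, zero_mul]),
        Finset.mul_sum]
      refine Finset.sum_congr rfl fun s _ => ?_
      rw [show ((n - l - k : ℕ) : ℤ) = (n : ℤ) - l - k by omega]
      ring
    rw [expand, Finset.sum_congr rfl fun X _ => Finset.sum_congr rfl fun Z _ => key X Z,
      Finset.sum_congr rfl fun X _ => Finset.sum_comm, Finset.sum_comm]
    simp only [← Finset.sum_mul]
    rw [Finset.sum_congr rfl fun s _ => by rw [N_eval hc hb s]]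
    by_cases hlk : l = k
    · subst hlk
      rw [if_pos (⟨rfl, trivial⟩ : l = l ∧ True)]
      have step : ∀ s ∈ Finset.range (n + 1),
          (if s = l ∧ s = l then c ⬝ᵥ b else 0) * zchoose ((n : ℤ) - l - l) ((i : ℤ) - l - l + s)
          = if s = l then (c ⬝ᵥ b) * zchoose ((n : ℤ) - l - l) ((i : ℤ) - l - l + s) else 0 := by
        intro s _
        by_cases h : s = l <;> simp [h]
      rw [Finset.sum_congr rfl step, Finset.sum_ite_eq' (Finset.range (n + 1)) l
        (fun s => (c ⬝ᵥ b) * zchoose ((n : ℤ) - l - l) ((i : ℤ) - l - l + s)),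
        if_pos (Finset.mem_range.mpr (by omega))]
      rw [show (n : ℤ) - l - l = (n : ℤ) - 2 * l by ring,
        show (i : ℤ) - l - l + l = (i : ℤ) - l by ring, mul_comm]
    · rw [if_neg (fun h => hlk h.1)]
      refine Finset.sum_eq_zero fun s _ => ?_
      rw [if_neg (fun h => hlk (by omega)), zero_mul]
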